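/- Let λ > 0 and s̃ ≥ 1 be an integer with ρ := ρ₋(A, s̄+2s̃) > 0, and suppose x* is a minimizer of φ_λ over ℝⁿ with ‖x*_{S̄ᶜ}‖₀ ≤ s̃. Let x ∈ ℝⁿ with ‖x_{S̄ᶜ}‖₀ ≤ s̃, let M ≥ ρ/2, set x⁺ = T_{λ,M}(x), and suppose the descent condition φ_λ(x⁺) ≤ ψ_{λ,M}(x; x⁺) holds. Then φ_λ(x⁺) − φ_λ(x*) ≤ (1 − ρ/(4M)) · (φ_λ(x) − φ_λ(x*)). -/

import Mathlib

open scoped BigOperators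
open Matrix

noncomputable section

namespace PGH

/-- Euclidean dot product on `Fin n → ℝ`. -/
def dot {n : ℕ} (x y : Fin n → ℝ) : ℝ := ∑ i, x i * y i

/-- Squared Euclidean norm. -/
def sqnorm {n : ℕ} (x : Fin n → ℝ) : ℝ := ∑ i, (x i) ^ 2

/-- Euclidean (ℓ₂) norm. -/
noncomputable def l2 {n : ℕ} (x : Fin n → ℝ) : ℝ := Real.sqrt (sqnorm x)

/-- ℓ₁ norm. -/
def l1 {n : ℕ} (x : Fin n → ℝ) : ℝ := ∑ i, |x i|

/-- ℓ∞ norm (maximum absolute coordinate). -/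
noncomputable def linf {n : ℕ} (x : Fin n → ℝ) : ℝ := ⨆ i, |x i|

/-- Support of a vector. -/
def supp {n : ℕ} (x : Fin n → ℝ) : Finset (Fin n) := Finset.univ.filter (fun i => x i ≠ 0)

/-- Number of nonzero coordinates. -/
def l0 {n : ℕ} (x : Fin n → ℝ) : ℕ := (supp x).card

/-- Number of nonzero coordinates within the index set `S`
(i.e. `‖x_S‖₀` for the restriction of `x` to `S`). -/
def l0on {n : ℕ} (S : Finset (Fin n)) (x : Fin n → ℝ) : ℕ :=
  (S.filter (fun i => x i ≠ 0)).card

/-- ℓ₁ norm of the restriction of `x` to the index set `S`. -/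
def l1on {n : ℕ} (S : Finset (Fin n)) (x : Fin n → ℝ) : ℝ := ∑ i ∈ S, |x i|

/-- Gradient of `f(x) = (1/2)‖Ax - b‖₂²`, namely `Aᵀ(Ax - b)`. -/
def grad {m n : ℕ} (A : Matrix (Fin m) (Fin n) ℝ) (b : Fin m → ℝ) (x : Fin n → ℝ) :
    Fin n → ℝ :=
  Aᵀ.mulVec (A.mulVec x - b)

/-- Least-squares objective `f(x) = (1/2)‖Ax - b‖₂²`. -/
def fls {m n : ℕ} (A : Matrix (Fin m) (Fin n) ℝ) (b : Fin m → ℝ) (x : Fin n → ℝ) : ℝ :=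
  sqnorm (A.mulVec x - b) / 2

/-- ℓ₁-regularized least-squares objective `φ_λ(x) = f(x) + λ‖x‖₁`. -/
def phi {m n : ℕ} (A : Matrix (Fin m) (Fin n) ℝ) (b : Fin m → ℝ) (lam : ℝ)
    (x : Fin n → ℝ) : ℝ :=
  fls A b x + lam * l1 x

/-- Restricted maximal eigenvalue `ρ₊(A, s)`. -/
noncomputable def rhoPlus {m n : ℕ} (A : Matrix (Fin m) (Fin n) ℝ) (s : ℕ) : ℝ :=
  sSup {r | ∃ x : Fin n → ℝ, x ≠ 0 ∧ l0 x ≤ s ∧ r = sqnorm (A.mulVec x) / sqnorm x}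

/-- Restricted minimal eigenvalue `ρ₋(A, s)`. -/
noncomputable def rhoMinus {m n : ℕ} (A : Matrix (Fin m) (Fin n) ℝ) (s : ℕ) : ℝ :=
  sInf {r | ∃ x : Fin n → ℝ, x ≠ 0 ∧ l0 x ≤ s ∧ r = sqnorm (A.mulVec x) / sqnorm x}

/-- `ξ` is a subgradient of the ℓ₁ norm at `x`. -/
def IsSubgrad {n : ℕ} (x ξ : Fin n → ℝ) : Prop :=
  ∀ i, (x i ≠ 0 → ξ i = Real.sign (x i)) ∧ (x i = 0 → |ξ i| ≤ 1)

/-- Optimality residue `ω_λ(x) = min_{ξ ∈ ∂‖x‖₁} ‖Aᵀ(Ax−b) + λξ‖_∞`. -/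
noncomputable def omega {m n : ℕ} (A : Matrix (Fin m) (Fin n) ℝ) (b : Fin m → ℝ)
    (lam : ℝ) (x : Fin n → ℝ) : ℝ :=
  sInf {r | ∃ ξ : Fin n → ℝ, IsSubgrad x ξ ∧
    r = linf (fun i => grad A b x i + lam * ξ i)}

/-- The local model `ψ_{λ,L}(y; x)`. -/
def psi {m n : ℕ} (A : Matrix (Fin m) (Fin n) ℝ) (b : Fin m → ℝ) (lam L : ℝ)
    (y x : Fin n → ℝ) : ℝ :=
  fls A b y + dot (grad A b y) (x - y) + L / 2 * sqnorm (x - y) + lam * l1 x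

/-- The noise-domination condition
`λ ≥ max{4, (γ+1)/((1−δ')γ−(1+δ'))} ⬝ ‖Aᵀz‖_∞`. -/
def noiseCond {m n : ℕ} (A : Matrix (Fin m) (Fin n) ℝ) (z : Fin m → ℝ)
    (dp gam lam : ℝ) : Prop :=
  lam ≥ max 4 ((gam + 1) / ((1 - dp) * gam - (1 + dp))) * linf (Aᵀ.mulVec z)

section Aux

variable {m n : ℕ}

lemma sqnorm_nonneg' (x : Fin n → ℝ) : 0 ≤ sqnorm x :=
  Finset.sum_nonneg fun _ _ => sq_nonneg _

lemma sqnorm_pos_of_ne (x : Fin n → ℝ) (hx : x ≠ 0) : 0 < sqnorm x := by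
  rcases (sqnorm_nonneg' x).lt_or_eq with h | h
  · exact h
  · exfalso; apply hx; funext i
    have h0 := (Finset.sum_eq_zero_iff_of_nonneg
      (fun i _ => sq_nonneg (x i))).mp h.symm i (Finset.mem_univ i)
    exact pow_eq_zero_iff two_ne_zero |>.mp h0

lemma sqnorm_add' (v w : Fin n → ℝ) :
    sqnorm (v + w) = sqnorm v + 2 * ∑ i, v i * w i + sqnorm w := by
  simp only [sqnorm, Pi.add_apply, Finset.mul_sum, ← Finset.sum_add_distrib]
  exact Finset.sum_congr rfl fun i _ => by ring

lemma sqnorm_smul' (c : ℝ) (v : Fin n → ℝ) :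
    sqnorm (fun i => c * v i) = c ^ 2 * sqnorm v := by
  simp only [sqnorm, Finset.mul_sum]
  exact Finset.sum_congr rfl fun i _ => by ring

lemma mulVec_smul'' (A : Matrix (Fin m) (Fin n) ℝ) (c : ℝ) (v : Fin n → ℝ) :
    A.mulVec (fun i => c * v i) = fun j => c * A.mulVec v j := by
  funext j
  simp only [Matrix.mulVec, dotProduct, Finset.mul_sum]
  exact Finset.sum_congr rfl fun i _ => by ring

lemma fls_expand (A : Matrix (Fin m) (Fin n) ℝ) (b : Fin m → ℝ) (x d : Fin n → ℝ) :
    fls A b (x + d) = fls A b x + dot (grad A b x) d + sqnorm (A.mulVec d) / 2 := by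
  have hadj : dot (grad A b x) d = ∑ i, (A.mulVec x - b) i * (A.mulVec d) i := by
    simp only [grad, dot, Matrix.mulVec, dotProduct, Matrix.transpose_apply,
      Finset.sum_mul, Finset.mul_sum]
    rw [Finset.sum_comm]
    refine Finset.sum_congr rfl fun i _ => Finset.sum_congr rfl fun j _ => by
      simp only [Pi.sub_apply]; ring
  have hlin : A.mulVec (x + d) - b = (A.mulVec x - b) + A.mulVec d := by
    rw [Matrix.mulVec_add]; funext j; simp; ring
  rw [fls, hlin, sqnorm_add', ← hadj, fls]; ring

lemma psi_eq (A : Matrix (Fin m) (Fin n) ℝ) (b : Fin m → ℝ) (lam L : ℝ) (x u : Fin n → ℝ) :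
    psi A b lam L x u
      = phi A b lam u + L / 2 * sqnorm (u - x) - sqnorm (A.mulVec (u - x)) / 2 := by
  have hxu : x + (u - x) = u := by funext i; simp
  have h := fls_expand A b x (u - x)
  rw [hxu] at h
  rw [psi, phi, h]; ring

lemma l0_sub_le (S : Finset (Fin n)) (st : ℕ) (x y : Fin n → ℝ)
    (hx : l0on Sᶜ x ≤ st) (hy : l0on Sᶜ y ≤ st) :
    l0 (x - y) ≤ S.card + 2 * st := by
  have hsub : supp (x - y) ⊆
      (S ∪ Sᶜ.filter fun i => x i ≠ 0) ∪ Sᶜ.filter fun i => y i ≠ 0 := by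
    intro i hi
    simp only [supp, Finset.mem_filter, Finset.mem_univ, true_and, Pi.sub_apply] at hi
    by_cases hiS : i ∈ S
    · simp [Finset.mem_union, hiS]
    · have hic : i ∈ Sᶜ := Finset.mem_compl.mpr hiS
      by_cases hxi : x i = 0
      · have hyi : y i ≠ 0 := by intro h; apply hi; rw [hxi, h]; ring
        simp [Finset.mem_union, Finset.mem_filter, hic, hyi]
      · simp [Finset.mem_union, Finset.mem_filter, hic, hxi]
  calc l0 (x - y) ≤ _ := Finset.card_le_card hsub
    _ ≤ (S.card + (Sᶜ.filter fun i => x i ≠ 0).card) + (Sᶜ.filter fun i => y i ≠ 0).card := by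
        refine le_trans (Finset.card_union_le _ _) (add_le_add (Finset.card_union_le _ _) le_rfl)
    _ ≤ (S.card + st) + st := add_le_add (add_le_add le_rfl hx) hy
    _ = S.card + 2 * st := by ring

lemma rho_mul_le (A : Matrix (Fin m) (Fin n) ℝ) (s : ℕ) (d : Fin n → ℝ) (hd : l0 d ≤ s) :
    rhoMinus A s * sqnorm d ≤ sqnorm (A.mulVec d) := by
  by_cases h0 : d = 0
  · subst h0
    simp [sqnorm, Matrix.mulVec_zero]
  · have hpos := sqnorm_pos_of_ne d h0
    have hbdd : BddBelow {r | ∃ x : Fin n → ℝ, x ≠ 0 ∧ l0 x ≤ s ∧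
        r = sqnorm (A.mulVec x) / sqnorm x} := by
      refine ⟨0, fun r hr => ?_⟩
      obtain ⟨v, -, -, rfl⟩ := hr
      exact div_nonneg (sqnorm_nonneg' _) (sqnorm_nonneg' _)
    have hmem : sqnorm (A.mulVec d) / sqnorm d ∈ {r | ∃ x : Fin n → ℝ, x ≠ 0 ∧ l0 x ≤ s ∧
        r = sqnorm (A.mulVec x) / sqnorm x} := ⟨d, h0, hd, rfl⟩
    have hle : rhoMinus A s ≤ sqnorm (A.mulVec d) / sqnorm d := csInf_le hbdd hmem
    calc rhoMinus A s * sqnorm d ≤ (sqnorm (A.mulVec d) / sqnorm d) * sqnorm d :=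
          mul_le_mul_of_nonneg_right hle hpos.le
      _ = sqnorm (A.mulVec d) := div_mul_cancel₀ _ hpos.ne'

lemma phi_convex (A : Matrix (Fin m) (Fin n) ℝ) (b : Fin m → ℝ) (lam : ℝ)
    (hlam : 0 ≤ lam) (a : ℝ) (ha0 : 0 ≤ a) (ha1 : a ≤ 1) (x y : Fin n → ℝ) :
    phi A b lam (fun i => (1 - a) * x i + a * y i)
      ≤ (1 - a) * phi A b lam x + a * phi A b lam y := by
  have hmv : A.mulVec (fun i => (1 - a) * x i + a * y i) - b
      = fun j => (1 - a) * (A.mulVec x - b) j + a * (A.mulVec y - b) j := by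
    funext j
    have hterm : ∀ i, A j i * ((1 - a) * x i + a * y i)
        = (1 - a) * (A j i * x i) + a * (A j i * y i) := fun i => by ring
    simp only [Matrix.mulVec, dotProduct, Pi.sub_apply, hterm,
      Finset.sum_add_distrib, ← Finset.mul_sum]
    ring
  have hf : fls A b (fun i => (1 - a) * x i + a * y i)
      ≤ (1 - a) * fls A b x + a * fls A b y := by
    rw [fls, fls, fls, hmv]
    have hsum : sqnorm (fun j => (1 - a) * (A.mulVec x - b) j + a * (A.mulVec y - b) j)
        ≤ (1 - a) * sqnorm (A.mulVec x - b) + a * sqnorm (A.mulVec y - b) := by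
      simp only [sqnorm, Finset.mul_sum, ← Finset.sum_add_distrib]
      refine Finset.sum_le_sum fun j _ => ?_
      nlinarith [mul_nonneg (mul_nonneg ha0 (sub_nonneg.mpr ha1))
        (sq_nonneg ((A.mulVec x - b) j - (A.mulVec y - b) j))]
    linarith
  have hl1 : l1 (fun i => (1 - a) * x i + a * y i) ≤ (1 - a) * l1 x + a * l1 y := by
    simp only [l1, Finset.mul_sum, ← Finset.sum_add_distrib]
    refine Finset.sum_le_sum fun i _ => ?_
    calc |(1 - a) * x i + a * y i| ≤ |(1 - a) * x i| + |a * y i| := abs_add_le _ _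
      _ = (1 - a) * |x i| + a * |y i| := by
          rw [abs_mul, abs_mul, abs_of_nonneg (by linarith : (0:ℝ) ≤ 1 - a),
            abs_of_nonneg ha0]
  have := mul_le_mul_of_nonneg_left hl1 hlam
  simp only [phi]
  nlinarith

lemma opt_strong (A : Matrix (Fin m) (Fin n) ℝ) (b : Fin m → ℝ) (lam : ℝ)
    (hlam : 0 < lam) (xstar : Fin n → ℝ)
    (hmin : ∀ u, phi A b lam xstar ≤ phi A b lam u) (x : Fin n → ℝ) :
    sqnorm (A.mulVec (x - xstar)) / 2 ≤ phi A b lam x - phi A b lam xstar := by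
  set d : Fin n → ℝ := x - xstar with hd
  set g : ℝ := dot (grad A b xstar) d with hg
  set q : ℝ := sqnorm (A.mulVec d) with hqdef
  set C : ℝ := g + lam * (l1 x - l1 xstar) with hC
  have hq0 : 0 ≤ q := sqnorm_nonneg' _
  have hphix : phi A b lam x = phi A b lam xstar + C + q / 2 := by
    have hx : xstar + d = x := by funext i; simp [hd]
    have h := fls_expand A b xstar d
    rw [hx] at h
    simp only [phi, h, hC]; ring
  have step1 : ∀ t : ℝ, 0 < t → t ≤ 1 → 0 ≤ t * C + t ^ 2 * q / 2 := by
    intro t ht0 ht1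
    have hexp := fls_expand A b xstar (fun i => t * d i)
    have hdot : dot (grad A b xstar) (fun i => t * d i) = t * g := by
      simp only [hg, dot, Finset.mul_sum]
      exact Finset.sum_congr rfl fun i _ => by ring
    have hAq : sqnorm (A.mulVec (fun i => t * d i)) = t ^ 2 * q := by
      rw [mulVec_smul'', sqnorm_smul', hqdef]
    have hl1 : l1 (xstar + fun i => t * d i) ≤ (1 - t) * l1 xstar + t * l1 x := by
      simp only [l1, Finset.mul_sum, ← Finset.sum_add_distrib, Pi.add_apply]
      refine Finset.sum_le_sum fun i _ => ?_
      have heq : xstar i + t * d i = (1 - t) * xstar i + t * x i := by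
        simp [hd]; ring
      rw [heq]
      calc |(1 - t) * xstar i + t * x i| ≤ |(1 - t) * xstar i| + |t * x i| := abs_add_le _ _
        _ = (1 - t) * |xstar i| + t * |x i| := by
            rw [abs_mul, abs_mul, abs_of_nonneg (by linarith : (0:ℝ) ≤ 1 - t),
              abs_of_nonneg ht0.le]
    have hmin' := hmin (xstar + fun i => t * d i)
    rw [phi, phi, hexp, hdot, hAq] at hmin'
    have hl1' := mul_le_mul_of_nonneg_left hl1 hlam.le
    simp only [hC]
    nlinarith
  have hCpos : 0 ≤ C := by
    by_contra hCneg
    push_neg at hCneg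
    rcases eq_or_lt_of_le hq0 with hq | hq
    · have h1 := step1 1 one_pos le_rfl
      nlinarith
    · set t : ℝ := min 1 (-C / q) with ht
      have ht0 : 0 < t := lt_min one_pos (div_pos (neg_pos.mpr hCneg) hq)
      have ht1 : t ≤ 1 := min_le_left _ _
      have htq : t * q ≤ -C := by
        have h2 : t ≤ -C / q := min_le_right _ _
        calc t * q ≤ (-C / q) * q := mul_le_mul_of_nonneg_right h2 hq.le
          _ = -C := div_mul_cancel₀ _ hq.ne'
      have h1 := step1 t ht0 ht1
      nlinarith [mul_pos ht0 (neg_pos.mpr hCneg),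
        mul_le_mul_of_nonneg_left htq (half_pos ht0).le]
  linarith [hphix]

end Aux

theorem stmt10 {m n : ℕ} (A : Matrix (Fin m) (Fin n) ℝ) (b : Fin m → ℝ)
    (S : Finset (Fin n)) (lam : ℝ) (hlam : 0 < lam) (st : ℕ) (hst : 1 ≤ st)
    (hrho : 0 < rhoMinus A (S.card + 2 * st))
    (xstar : Fin n → ℝ) (hmin : ∀ u, phi A b lam xstar ≤ phi A b lam u)
    (hsp : l0on Sᶜ xstar ≤ st)
    (x : Fin n → ℝ) (hx : l0on Sᶜ x ≤ st)
    (M : ℝ) (hM : rhoMinus A (S.card + 2 * st) / 2 ≤ M)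
    (xplus : Fin n → ℝ) (hT : ∀ u, psi A b lam M x xplus ≤ psi A b lam M x u)
    (hdesc : phi A b lam xplus ≤ psi A b lam M x xplus) :
    phi A b lam xplus - phi A b lam xstar ≤
      (1 - rhoMinus A (S.card + 2 * st) / (4 * M)) *
        (phi A b lam x - phi A b lam xstar) := by
  set ρ : ℝ := rhoMinus A (S.card + 2 * st) with hρdef
  have hM0 : 0 < M := lt_of_lt_of_le (by linarith) hM
  set a : ℝ := ρ / (2 * M) with ha
  have ha0 : 0 < a := div_pos hrho (by linarith)
  have ha1 : a ≤ 1 := by rw [ha, div_le_one (by linarith)]; linarith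
  set u : Fin n → ℝ := fun i => (1 - a) * x i + a * xstar i with hu
  set D : ℝ := sqnorm (x - xstar) with hD
  set Q : ℝ := sqnorm (A.mulVec (x - xstar)) with hQ
  have hD0 : 0 ≤ D := sqnorm_nonneg' _
  have hQ0 : 0 ≤ Q := sqnorm_nonneg' _
  have hsparse : l0 (x - xstar) ≤ S.card + 2 * st := l0_sub_le S st x xstar hx hsp
  have hρQ : ρ * D ≤ Q := rho_mul_le A _ _ hsparse
  have hE : Q / 2 ≤ phi A b lam x - phi A b lam xstar :=
    opt_strong A b lam hlam xstar hmin x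
  have hΔ0 : 0 ≤ phi A b lam x - phi A b lam xstar := sub_nonneg.mpr (hmin x)
  have hux : u - x = fun i => a * ((x - xstar) i) * (-1) := by
    funext i; simp only [hu, Pi.sub_apply]; ring
  have hux' : u - x = fun i => (-a) * ((x - xstar) i) := by
    rw [hux]; funext i; ring
  have hsq_ux : sqnorm (u - x) = a ^ 2 * D := by
    rw [hux', sqnorm_smul', hD]; ring
  have hsqA_ux : sqnorm (A.mulVec (u - x)) = a ^ 2 * Q := by
    rw [hux', mulVec_smul'', sqnorm_smul']
    have : sqnorm (fun j => (-a) * A.mulVec (x - xstar) j)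
        = (-a) ^ 2 * sqnorm (A.mulVec (x - xstar)) := sqnorm_smul' _ _
    rw [hQ]; ring
  have hpsiu := psi_eq A b lam M x u
  rw [hsq_ux, hsqA_ux] at hpsiu
  have hconv : phi A b lam u ≤ (1 - a) * phi A b lam x + a * phi A b lam xstar :=
    phi_convex A b lam hlam.le a ha0.le ha1 x xstar
  have h2 := hT u
  rw [hpsiu] at h2
  have hchain : phi A b lam xplus
      ≤ (1 - a) * phi A b lam x + a * phi A b lam xstar
        + M / 2 * (a ^ 2 * D) - a ^ 2 * Q / 2 := by linarith
  have h1 : a * M * D = ρ * D / 2 := by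
    rw [ha]; field_simp
  have hkey : a * (M * D - Q) ≤ phi A b lam x - phi A b lam xstar := by
    nlinarith [mul_nonneg ha0.le hQ0]
  have hcoef : ρ / (4 * M) = a / 2 := by
    rw [ha]; ring
  rw [hcoef]
  have hfin := mul_le_mul_of_nonneg_left hkey (by positivity : (0:ℝ) ≤ a / 2)
  nlinarith [hchain, hfin, hΔ0, ha0]

end PGH
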